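/- Let X be a σ-compact Tychonoff space. Then C_p(X), the space of continuous real-valued functions on X with the topology of pointwise convergence, has countable fan tightness; consequently, for every metrizable locally convex space E, the space E with its weak topology has countable fan tightness. -/

import Mathlib

open Filter Topology Set Pointwise

/-- `X` has countable fan tightness at `x`. -/
def CountableFanTightnessAt (X : Type*) [TopologicalSpace X] (x : X) : Prop :=
  ∀ A : ℕ → Set X, (∀ n, x ∈ closure (A n)) →
    ∃ F : ℕ → Set X, (∀ n, F n ⊆ A n) ∧ (∀ n, (F n).Finite) ∧
      x ∈ closure (⋃ n, F n)

/-- `C_p(X)`: the continuous real-valued functions on `X` with the topology of pointwise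
convergence (the subspace topology from the product `X → ℝ`). -/
abbrev Cp (X : Type*) [TopologicalSpace X] : Type _ := {f : X → ℝ // Continuous f}

/-- Countable fan tightness transfers along inducing maps. -/
lemma countableFanTightnessAt_of_isInducing {Y Z : Type*} [TopologicalSpace Y]
    [TopologicalSpace Z] {i : Y → Z} (hi : IsInducing i) {x : Y}
    (h : CountableFanTightnessAt Z (i x)) : CountableFanTightnessAt Y x := by
  intro A hA
  have hA' : ∀ n, i x ∈ closure (i '' A n) := by
    intro n
    have := hA n
    rw [hi.closure_eq_preimage_closure_image] at this
    exact this
  obtain ⟨G, hGsub, hGfin, hGcl⟩ := h (fun n => i '' A n) hA'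
  have hsel : ∀ n, ∃ F : Set Y, F ⊆ A n ∧ F.Finite ∧ G n ⊆ i '' F := by
    intro n
    have hz : ∀ z ∈ G n, ∃ a ∈ A n, i a = z := fun z hz => hGsub n hz
    choose a ha1 ha2 using hz
    refine ⟨{y | ∃ z hz', a z hz' = y}, ?_, (hGfin n).dependent_image a, ?_⟩
    · rintro _ ⟨z, hz', rfl⟩; exact ha1 z hz'
    · intro z hz'; exact ⟨a z hz', ⟨z, hz', rfl⟩, ha2 z hz'⟩
  choose F hF1 hF2 hF3 using hsel
  refine ⟨F, hF1, hF2, ?_⟩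
  rw [hi.closure_eq_preimage_closure_image, mem_preimage]
  have hsub : (⋃ n, G n) ⊆ i '' ⋃ n, F n := by
    rw [Set.image_iUnion]
    exact Set.iUnion_mono hF3
  exact closure_mono hsub hGcl

lemma cp_key (X : Type*) [TopologicalSpace X] [SigmaCompactSpace X] (f : Cp X) :
    CountableFanTightnessAt (Cp X) f := by
  intro A hA
  have hAne : ∀ n, (A n).Nonempty := fun n => closure_nonempty_iff.mp ⟨f, hA n⟩
  choose g₀ hg₀ using hAne
  -- key claim
  have claim : ∀ (n m k : ℕ), ∃ F : Set (Cp X), F ⊆ A n ∧ F.Finite ∧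
      ∀ y : Fin k → X, (∀ i, y i ∈ compactCovering X m) →
        ∃ g ∈ F, ∀ i, |g.1 (y i) - f.1 (y i)| < 1 / (k + 1) := by
    intro n m k
    set δ : ℝ := 1 / (k + 1) with hδdef
    have hδ : 0 < δ := by positivity
    have hball : IsOpen {t : ℝ | |t| < δ} := isOpen_Iio.preimage continuous_abs
    set C : Set (Fin k → X) := Set.pi univ (fun _ => compactCovering X m) with hCdef
    have hC : IsCompact C := isCompact_univ_pi fun _ => isCompact_compactCovering X m
    set U : A n → Set (Fin k → X) :=
      fun g => ⋂ i, (fun y : Fin k → X => (g : Cp X).1 (y i) - f.1 (y i)) ⁻¹' {t | |t| < δ}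
      with hUdef
    have hUopen : ∀ g, IsOpen (U g) := by
      intro g
      exact isOpen_iInter_of_finite fun i =>
        hball.preimage ((((g : Cp X).2.comp (continuous_apply i))).sub
          (f.2.comp (continuous_apply i)))
    have hcover : C ⊆ ⋃ g, U g := by
      intro y _
      have hV : IsOpen {g : Cp X | ∀ i, |g.1 (y i) - f.1 (y i)| < δ} := by
        have : {g : Cp X | ∀ i, |g.1 (y i) - f.1 (y i)| < δ} =
            ⋂ i, (fun g : Cp X => g.1 (y i) - f.1 (y i)) ⁻¹' {t | |t| < δ} := by
          ext g; simp [Set.mem_iInter]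
        rw [this]
        exact isOpen_iInter_of_finite fun i =>
          hball.preimage (((continuous_apply (y i)).comp continuous_subtype_val).sub
            continuous_const)
      have hfV : f ∈ {g : Cp X | ∀ i, |g.1 (y i) - f.1 (y i)| < δ} := by
        simp [hδ]
      obtain ⟨g, hg1, hg2⟩ := mem_closure_iff.mp (hA n) _ hV hfV
      exact mem_iUnion.mpr ⟨⟨g, hg2⟩, by simpa [hUdef, Set.mem_iInter] using hg1⟩
    obtain ⟨t, ht⟩ := hC.elim_finite_subcover U hUopen hcover
    refine ⟨Subtype.val '' (t : Set (A n)), ?_, (t.finite_toSet.image _), ?_⟩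
    · rintro g ⟨g', -, rfl⟩; exact g'.2
    · intro y hy
      have : y ∈ C := by intro i _; exact hy i
      obtain ⟨g, hgt, hgU⟩ := mem_iUnion₂.mp (ht this)
      refine ⟨g.1, ⟨g, hgt, rfl⟩, ?_⟩
      intro i
      simpa using mem_iInter.mp hgU i
  choose F hFA hFfin hFprop using
    fun n => claim n ((Denumerable.eqv (ℕ × ℕ)).symm n).1 ((Denumerable.eqv (ℕ × ℕ)).symm n).2
  set e : ℕ ≃ ℕ × ℕ := (Denumerable.eqv (ℕ × ℕ)).symm
  refine ⟨fun n => F n ∪ {g₀ n}, fun n => union_subset (hFA n) (by simpa using hg₀ n),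
    fun n => (hFfin n).union (finite_singleton _), ?_⟩
  rw [mem_closure_iff]
  intro O hO hfO
  obtain ⟨W, hW, rfl⟩ := isOpen_induced_iff.mp hO
  obtain ⟨I, u, hu, hIW⟩ := isOpen_pi_iff.mp hW f.1 hfO
  rcases I.eq_empty_or_nonempty with hI | hI
  · refine ⟨g₀ 0, ?_, mem_iUnion.mpr ⟨0, Or.inr rfl⟩⟩
    apply hIW
    simp [hI]
  · -- ε part
    have hε : ∀ x : X, ∃ ε : ℝ, 0 < ε ∧ (x ∈ I → Metric.ball (f.1 x) ε ⊆ u x) := by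
      intro x
      by_cases hx : x ∈ I
      · obtain ⟨ε, hε, hb⟩ := Metric.isOpen_iff.mp (hu x hx).1 (f.1 x) (hu x hx).2
        exact ⟨ε, hε, fun _ => hb⟩
      · exact ⟨1, one_pos, fun h => absurd h hx⟩
    choose ε hεpos hεball using hε
    set εm : ℝ := I.inf' hI ε with hεmdef
    have hεmpos : 0 < εm := by
      rw [hεmdef, Finset.lt_inf'_iff]
      exact fun x _ => hεpos x
    have hεmle : ∀ x ∈ I, εm ≤ ε x := fun x hx => Finset.inf'_le _ hx
    -- m part
    choose μ hμ using fun x : X => exists_mem_compactCovering x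
    set m : ℕ := I.sup μ with hmdef
    have hmI : ∀ x ∈ I, x ∈ compactCovering X m :=
      fun x hx => compactCovering_subset X (Finset.le_sup hx) (hμ x)
    -- k part
    obtain ⟨k₀, hk₀⟩ := exists_nat_gt (1 / εm)
    set k : ℕ := max I.card k₀ with hkdef
    have hcard : I.card ≤ k := le_max_left _ _
    have hδε : 1 / ((k : ℝ) + 1) < εm := by
      rw [div_lt_iff₀ (by positivity)]
      have h1 : (1 : ℝ) / εm < (k : ℝ) + 1 := by
        refine lt_of_lt_of_le hk₀ ?_
        have : (k₀ : ℝ) ≤ k := by exact_mod_cast le_max_right I.card k₀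
        linarith
      rw [div_lt_iff₀ hεmpos] at h1
      linarith
    set n : ℕ := e.symm (m, k) with hndef
    have hen : e n = (m, k) := e.apply_symm_apply _
    have key := hFprop n
    rw [hen] at key
    -- build the tuple y
    obtain ⟨x₀, hx₀⟩ := hI
    set l : List X := I.toList with hldef
    have hlen : l.length = I.card := Finset.length_toList I
    set y : Fin k → X := fun i => l.getD i x₀ with hydef
    have hyI : ∀ i, y i ∈ I := by
      intro i
      rcases lt_or_ge (i : ℕ) l.length with h | h
      · rw [hydef]
        simp only [List.getD_eq_getElem l x₀ h]
        exact Finset.mem_toList.mp (List.getElem_mem h)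
      · rw [hydef]; simp only [List.getD_eq_default l x₀ h]; exact hx₀
    obtain ⟨g, hgF, hgclose⟩ := key y (fun i => hmI _ (hyI i))
    refine ⟨g, ?_, mem_iUnion.mpr ⟨n, Or.inl hgF⟩⟩
    apply hIW
    intro x hx
    -- find index of x in l
    obtain ⟨i, hi, hix⟩ := List.mem_iff_getElem.mp (Finset.mem_toList.mpr hx)
    have hi' : i < l.length := hi
    have hik : i < k := lt_of_lt_of_le (hlen ▸ hi') hcard
    have hyx : y ⟨i, hik⟩ = x := by
      rw [hydef]
      simp only [List.getD_eq_getElem l x₀ hi']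
      exact hix
    have := hgclose ⟨i, hik⟩
    rw [hyx] at this
    apply hεball x hx
    rw [Metric.mem_ball, Real.dist_eq]
    calc |g.1 x - f.1 x| < 1 / ((k : ℝ) + 1) := this
      _ < εm := hδε
      _ ≤ ε x := hεmle x hx

lemma weakDual_sigmaCompact (E : Type) [AddCommGroup E] [Module ℝ E] [TopologicalSpace E]
    [IsTopologicalAddGroup E] [ContinuousSMul ℝ E]
    [FirstCountableTopology E] :
    SigmaCompactSpace (WeakDual ℝ E) := by
  obtain ⟨b, hb⟩ := (𝓝 (0 : E)).exists_antitone_basis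
  have hbmem : ∀ n, b n ∈ 𝓝 (0 : E) := fun n => hb.toHasBasis.mem_of_mem trivial
  set ι : WeakDual ℝ E → (E → ℝ) := fun φ x => topDualPairing ℝ E φ x with hιdef
  have hι : IsInducing ι := (WeakBilin.isEmbedding ContinuousLinearMap.coe_injective).toIsInducing
  set P : ℕ → Set (WeakDual ℝ E) := fun n => {φ | ∀ x ∈ b n, |topDualPairing ℝ E φ x| ≤ 1}
    with hPdef
  set S : ℕ → Set (E → ℝ) := fun n => {g | (∀ x y, g (x + y) = g x + g y) ∧
      (∀ (t : ℝ) (x : E), g (t • x) = t * g x) ∧ ∀ x ∈ b n, |g x| ≤ 1} with hSdef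
  have himg : ∀ n, ι '' P n = S n := by
    intro n
    apply Set.Subset.antisymm
    · rintro _ ⟨φ, hφ, rfl⟩
      exact ⟨fun x y => map_add φ x y, fun t x => map_smul φ t x, hφ⟩
    · rintro g ⟨hadd, hsmul, hbound⟩
      have hg0 : g 0 = 0 := by
        have := hsmul 0 0
        simpa using this
      set lin : E →ₗ[ℝ] ℝ :=
        { toFun := g, map_add' := hadd, map_smul' := hsmul } with hlindef
      have hcontAt : ContinuousAt lin 0 := by
        rw [ContinuousAt]
        have h0 : lin (0 : E) = 0 := hg0
        rw [h0]
        rw [Metric.tendsto_nhds]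
        intro εr hεr
        have hmem : (εr / 2) • (b n) ∈ 𝓝 (0 : E) :=
          (set_smul_mem_nhds_zero_iff (by positivity : εr / 2 ≠ 0)).mpr (hbmem n)
        filter_upwards [hmem] with x hx
        obtain ⟨v, hv, rfl⟩ := hx
        have : |g ((εr / 2) • v)| ≤ εr / 2 := by
          rw [hsmul]
          rw [abs_mul]
          calc |εr / 2| * |g v| ≤ |εr / 2| * 1 := by
                apply mul_le_mul_of_nonneg_left (hbound v hv) (abs_nonneg _)
            _ = εr / 2 := by rw [mul_one, abs_of_pos (by positivity)]
        rw [Real.dist_eq, sub_zero]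
        calc |lin ((εr / 2) • v)| ≤ εr / 2 := this
          _ < εr := by linarith
      have hcont : Continuous lin := continuous_of_continuousAt_zero lin.toAddMonoidHom hcontAt
      exact ⟨(⟨lin, hcont⟩ : E →L[ℝ] ℝ), hbound, rfl⟩
  have hScompact : ∀ n, IsCompact (S n) := by
    intro n
    -- bound
    have hc : ∀ x : E, ∃ c : ℝ, ∀ g ∈ S n, |g x| ≤ c := by
      intro x
      have htend : Tendsto (fun t : ℝ => t • x) (𝓝 0) (𝓝 (0 : E)) := by
        have : Continuous (fun t : ℝ => t • x) := continuous_id.smul continuous_const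
        simpa using this.tendsto 0
      have hev : ∀ᶠ t in 𝓝 (0 : ℝ), t • x ∈ b n := htend.eventually_mem (hbmem n)
      obtain ⟨t, htb, htne⟩ :=
        ((hev.filter_mono nhdsWithin_le_nhds).and
          (eventually_mem_nhdsWithin (s := {(0:ℝ)}ᶜ))).exists
      have htne' : t ≠ 0 := htne
      refine ⟨1 / |t|, fun g hg => ?_⟩
      have := hg.2.2 _ htb
      rw [hg.2.1 t x, abs_mul] at this
      rw [le_div_iff₀ (abs_pos.mpr htne')]
      linarith [mul_comm |t| |g x|]
    choose c hcb using hc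
    have hsub : S n ⊆ Set.pi univ (fun x => Icc (-(c x)) (c x)) := by
      intro g hg x _
      have := hcb x g hg
      rw [mem_Icc]
      constructor <;> [linarith [neg_abs_le (g x)]; linarith [le_abs_self (g x)]]
    have hclosed : IsClosed (S n) := by
      have h1 : IsClosed {g : E → ℝ | ∀ x y, g (x + y) = g x + g y} := by
        have : {g : E → ℝ | ∀ x y, g (x + y) = g x + g y} =
            ⋂ (x : E) (y : E), {g : E → ℝ | g (x + y) = g x + g y} := by
          ext g; simp
        rw [this]
        exact isClosed_iInter fun x => isClosed_iInter fun y =>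
          isClosed_eq (continuous_apply (x + y)) ((continuous_apply x).add (continuous_apply y))
      have h2 : IsClosed {g : E → ℝ | ∀ (t : ℝ) (x : E), g (t • x) = t * g x} := by
        have : {g : E → ℝ | ∀ (t : ℝ) (x : E), g (t • x) = t * g x} =
            ⋂ (t : ℝ) (x : E), {g : E → ℝ | g (t • x) = t * g x} := by
          ext g; simp
        rw [this]
        exact isClosed_iInter fun t => isClosed_iInter fun x =>
          isClosed_eq (continuous_apply _) (continuous_const.mul (continuous_apply _))
      have h3 : IsClosed {g : E → ℝ | ∀ x ∈ b n, |g x| ≤ 1} := by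
        have : {g : E → ℝ | ∀ x ∈ b n, |g x| ≤ 1} =
            ⋂ (x : E) (_ : x ∈ b n), {g : E → ℝ | |g x| ≤ 1} := by
          ext g; simp
        rw [this]
        exact isClosed_iInter fun x => isClosed_iInter fun _ =>
          isClosed_le (continuous_abs.comp (continuous_apply _)) continuous_const
      have : S n = {g : E → ℝ | ∀ x y, g (x + y) = g x + g y} ∩
          ({g | ∀ (t : ℝ) (x : E), g (t • x) = t * g x} ∩ {g | ∀ x ∈ b n, |g x| ≤ 1}) := by
        ext g; simp only [hSdef, mem_setOf_eq, mem_inter_iff]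
      rw [this]
      exact h1.inter (h2.inter h3)
    exact ((isCompact_univ_pi fun x => isCompact_Icc).of_isClosed_subset hclosed hsub)
  have hPcompact : ∀ n, IsCompact (P n) := by
    intro n
    rw [hι.isCompact_iff, himg n]
    exact hScompact n
  refine ⟨⟨P, hPcompact, ?_⟩⟩
  rw [Set.iUnion_eq_univ_iff]
  intro φ
  have hφcont : Tendsto (⇑(φ : E →L[ℝ] ℝ)) (𝓝 0) (𝓝 0) := by
    have := (φ : E →L[ℝ] ℝ).continuous.tendsto' 0 0 (map_zero _)
    exact this
  have hmem : {x : E | |topDualPairing ℝ E φ x| ≤ 1} ∈ 𝓝 (0 : E) := by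
    have h1 : {t : ℝ | |t| ≤ 1} ∈ 𝓝 (0 : ℝ) := by
      have : Metric.closedBall (0:ℝ) 1 ∈ 𝓝 (0:ℝ) := Metric.closedBall_mem_nhds _ one_pos
      simpa [Metric.closedBall, Real.dist_eq] using this
    exact hφcont h1
  obtain ⟨n, hn⟩ := hb.toHasBasis.mem_iff.mp hmem
  exact ⟨n, fun x hx => hn.2 hx⟩

/-- The natural map from `E` with the weak topology to `C_p` of the weak-* dual. -/
noncomputable def weakToCp (E : Type) [AddCommGroup E] [Module ℝ E] [TopologicalSpace E]
    [IsTopologicalAddGroup E] [ContinuousSMul ℝ E] :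
    WeakSpace ℝ E → Cp (WeakDual ℝ E) :=
  fun x => ⟨fun φ => topDualPairing ℝ E φ x, WeakDual.eval_continuous (𝕜 := ℝ) (E := E) x⟩

lemma isInducing_weakToCp (E : Type) [AddCommGroup E] [Module ℝ E] [TopologicalSpace E]
    [IsTopologicalAddGroup E] [ContinuousSMul ℝ E] : IsInducing (weakToCp E) := by
  constructor
  rw [instTopologicalSpaceSubtype, induced_compose]
  show TopologicalSpace.induced (fun x y => (topDualPairing ℝ E).flip x y) Pi.topologicalSpace = _
  congr 1

/-- Theorem 1.2 (and its consequence): for a σ-compact Tychonoff space `X` the space `C_p(X)`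
has countable fan tightness; consequently every metrizable locally convex space with the weak
topology has countable fan tightness. -/
theorem cp_fan_tightness_and_weak_fan_tightness :
    (∀ (X : Type) [TopologicalSpace X] [T35Space X] [SigmaCompactSpace X],
      ∀ f : Cp X, CountableFanTightnessAt (Cp X) f) ∧
    (∀ (E : Type) [AddCommGroup E] [Module ℝ E] [TopologicalSpace E]
      [IsTopologicalAddGroup E] [ContinuousSMul ℝ E] [LocallyConvexSpace ℝ E]
      [TopologicalSpace.MetrizableSpace E],
      ∀ x : WeakSpace ℝ E, CountableFanTightnessAt (WeakSpace ℝ E) x) := by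
  constructor
  · intro X _ _ _ f
    exact cp_key X f
  · intro E _ _ _ _ _ _ _ x
    haveI := weakDual_sigmaCompact E
    exact countableFanTightnessAt_of_isInducing (isInducing_weakToCp E)
      (cp_key (WeakDual ℝ E) (weakToCp E x))
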